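/- Let V be a complex Hilbert space, Ω ⊆ ℂ a connected open set, and H, K : Ω → GL(V) holomorphic maps with H(z)*H(z) = K(z)*K(z) for all z ∈ Ω. Then there exists a unitary operator U on V such that H(z) = U K(z) for all z ∈ Ω. -/

import Mathlib

open ContinuousLinearMap

theorem stmt1
    {V : Type*} [NormedAddCommGroup V] [InnerProductSpace ℂ V] [CompleteSpace V]
    (Ω : Set ℂ) (hΩ : IsOpen Ω) (hconn : IsConnected Ω)
    (H K : ℂ → (V →L[ℂ] V))
    (hH : DifferentiableOn ℂ H Ω) (hK : DifferentiableOn ℂ K Ω)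
    (hHinv : ∀ z ∈ Ω, IsUnit (H z)) (hKinv : ∀ z ∈ Ω, IsUnit (K z))
    (hfac : ∀ z ∈ Ω,
      ContinuousLinearMap.adjoint (H z) * H z = ContinuousLinearMap.adjoint (K z) * K z) :
    ∃ U ∈ unitary (V →L[ℂ] V), ∀ z ∈ Ω, H z = U * K z := by
  obtain ⟨z₀, hz₀⟩ := hconn.nonempty
  set U : ℂ → (V →L[ℂ] V) := fun z => H z * Ring.inverse (K z) with hUdef
  have hfac' : ∀ z ∈ Ω, star (H z) * H z = star (K z) * K z := by
    intro z hz
    rw [star_eq_adjoint, star_eq_adjoint]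
    exact hfac z hz
  have hUiso : ∀ z ∈ Ω, star (U z) * U z = 1 := by
    intro z hz
    have h1 : K z * Ring.inverse (K z) = 1 := Ring.mul_inverse_cancel _ (hKinv z hz)
    have e1 : star (U z) * U z
        = star (Ring.inverse (K z)) * ((star (H z) * H z) * Ring.inverse (K z)) := by
      simp only [hUdef, star_mul, mul_assoc]
    rw [e1, hfac' z hz]
    have e2 : star (Ring.inverse (K z)) * ((star (K z) * K z) * Ring.inverse (K z))
        = star (K z * Ring.inverse (K z)) * (K z * Ring.inverse (K z)) := by
      simp only [star_mul, mul_assoc]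
    rw [e2, h1, star_one, one_mul]
  -- each U z preserves norms
  have hnorm : ∀ z ∈ Ω, ∀ x : V, ‖U z x‖ = ‖x‖ := by
    intro z hz x
    have hinner : (inner ℂ (U z x) (U z x) : ℂ) = inner ℂ x x := by
      have h := adjoint_inner_left (U z) x (U z x)
      rw [← star_eq_adjoint] at h
      rw [← h]
      have hx : (star (U z)) ((U z) x) = x := by
        calc (star (U z)) ((U z) x) = ((star (U z)) * U z) x := rfl
          _ = x := by rw [hUiso z hz, ContinuousLinearMap.one_apply]
      rw [hx]
    have h3 : ‖U z x‖ ^ 2 = ‖x‖ ^ 2 := by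
      rw [norm_eq_sqrt_re_inner (𝕜 := ℂ) (U z x), norm_eq_sqrt_re_inner (𝕜 := ℂ) x, hinner]
    nlinarith [norm_nonneg (U z x), norm_nonneg x]
  -- U is differentiable on Ω
  have hUdiff : DifferentiableOn ℂ U Ω := hH.mul (hK.inverse hKinv)
  -- constancy via max modulus (strict convexity of Hilbert space)
  haveI : InnerProductSpace ℝ V := InnerProductSpace.complexToReal
  have hconst : ∀ x : V, ∀ z ∈ Ω, U z x = U z₀ x := by
    intro x z hz
    have hfd : DifferentiableOn ℂ (fun z => U z x) Ω :=
      hUdiff.clm_apply (differentiableOn_const x)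
    have hmax : IsMaxOn (norm ∘ fun z => U z x) Ω z₀ := by
      intro w hw
      simp only [Function.comp_apply, Set.mem_setOf_eq]
      rw [hnorm w hw x, hnorm z₀ hz₀ x]
    exact Complex.eqOn_of_isPreconnected_of_isMaxOn_norm hconn.isPreconnected hΩ hfd hz₀
      hmax hz
  have hconstU : ∀ z ∈ Ω, U z = U z₀ := by
    intro z hz
    ext x
    exact hconst x z hz
  -- U z₀ is unitary
  have hunit : IsUnit (U z₀) :=
    (hHinv z₀ hz₀).mul (isUnit_ringInverse.mpr (hKinv z₀ hz₀))
  have hsU : star (U z₀) * U z₀ = 1 := hUiso z₀ hz₀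
  have hUs : U z₀ * star (U z₀) = 1 := by
    have hinv : ↑hunit.unit⁻¹ = star (U z₀) :=
      Units.inv_eq_of_mul_eq_one_left (by rw [hunit.unit_spec]; exact hsU)
    calc U z₀ * star (U z₀) = ↑hunit.unit * ↑hunit.unit⁻¹ := by rw [hinv, hunit.unit_spec]
      _ = 1 := hunit.unit.mul_inv
  refine ⟨U z₀, Unitary.mem_iff.mpr ⟨hsU, hUs⟩, ?_⟩
  intro z hz
  have h1 : Ring.inverse (K z) * K z = 1 := Ring.inverse_mul_cancel _ (hKinv z hz)
  rw [← hconstU z hz, hUdef]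
  rw [mul_assoc, h1, mul_one]
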